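/- Let s > 0 and 0 < β ≤ min{s/2, 1}. Let A ∈ M_{s,β} and B ∈ M_{s,β}^+. Then for all i, j the series ∑_{k≥1} A_i^k B_k^j and ∑_{k≥1} B_i^k A_k^j converge absolutely in operator norm, the products AB and BA belong to M_{s,β}, and |AB|_{s,β} ≤ (2^{s/2+2}/β)·|A|_{s,β}·|B|_{s,β+} and |BA|_{s,β} ≤ (2^{s/2+2}/β)·|A|_{s,β}·|B|_{s,β+}. -/

import Mathlib

set_option maxHeartbeats 1000000


/-- The weight `w(i,j) = (√(i∧j) + |i−j|)/√(i∧j)` for positive integers `i, j`. -/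
noncomputable def w (i j : ℕ+) : ℝ :=
  (Real.sqrt (min (i : ℝ) (j : ℝ)) + |(i : ℝ) - (j : ℝ)|) / Real.sqrt (min (i : ℝ) (j : ℝ))

/-- The dimension `2·d_j` of the `j`-th block. -/
def dim (d : ℕ+ → ℕ+) (j : ℕ+) : ℕ := 2 * d j


/-- auxiliary weight `W i j = √(i∧j) + |i-j|` -/
noncomputable def Wf (i j : ℕ+) : ℝ :=
  Real.sqrt (min (i : ℝ) (j : ℝ)) + |(i : ℝ) - (j : ℝ)|

lemma pn_one_le (i : ℕ+) : (1:ℝ) ≤ (i:ℝ) := by exact_mod_cast i.one_le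

lemma min_cast (i j : ℕ+) : ((min i j : ℕ+) : ℝ) = min (i:ℝ) (j:ℝ) := by
  rcases le_total i j with h | h
  · rw [min_eq_left h, min_eq_left]; exact_mod_cast h
  · rw [min_eq_right h, min_eq_right]; exact_mod_cast h

lemma one_le_min (i j : ℕ+) : (1:ℝ) ≤ min (i:ℝ) (j:ℝ) :=
  le_min (pn_one_le i) (pn_one_le j)

lemma one_le_sqrt_min (i j : ℕ+) : (1:ℝ) ≤ Real.sqrt (min (i:ℝ) (j:ℝ)) := by
  rw [show (1:ℝ) = Real.sqrt 1 by simp]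
  exact Real.sqrt_le_sqrt (one_le_min i j)

lemma sqrt_min_pos (i j : ℕ+) : (0:ℝ) < Real.sqrt (min (i:ℝ) (j:ℝ)) :=
  lt_of_lt_of_le one_pos (one_le_sqrt_min i j)

lemma Wf_eq (i j : ℕ+) : Wf i j = Real.sqrt (min (i:ℝ) (j:ℝ)) * w i j := by
  rw [w, Wf, mul_div_cancel₀]
  exact ne_of_gt (sqrt_min_pos i j)

lemma one_le_Wf (i j : ℕ+) : 1 ≤ Wf i j :=
  le_add_of_le_of_nonneg (one_le_sqrt_min i j) (abs_nonneg _)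

lemma Wf_pos (i j : ℕ+) : 0 < Wf i j := lt_of_lt_of_le one_pos (one_le_Wf i j)

lemma one_le_w (i j : ℕ+) : 1 ≤ w i j := by
  rw [w, le_div_iff₀ (sqrt_min_pos i j), one_mul]
  exact le_add_of_le_of_nonneg le_rfl (abs_nonneg _)

lemma w_pos (i j : ℕ+) : 0 < w i j := lt_of_lt_of_le one_pos (one_le_w i j)

lemma w_symm (i j : ℕ+) : w i j = w j i := by rw [w, w, min_comm, abs_sub_comm]

lemma Wf_symm (i j : ℕ+) : Wf i j = Wf j i := by rw [Wf, Wf, min_comm, abs_sub_comm]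

/-- the quantity `(i∧j)^β · w(i,j)^s` -/
noncomputable def nd (s β : ℝ) (i j : ℕ+) : ℝ := (min (i:ℝ) (j:ℝ)) ^ β * w i j ^ s

lemma nd_symm (s β : ℝ) (i j : ℕ+) : nd s β i j = nd s β j i := by
  rw [nd, nd, min_comm, w_symm]

lemma one_le_nd (s β : ℝ) (hs : 0 ≤ s) (hβ : 0 ≤ β) (i j : ℕ+) : 1 ≤ nd s β i j := by
  have h1 := Real.one_le_rpow (one_le_min i j) hβ
  have h2 := Real.one_le_rpow (one_le_w i j) hs
  calc (1:ℝ) = 1 * 1 := by ring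
  _ ≤ _ := mul_le_mul h1 h2 zero_le_one (le_trans zero_le_one h1)

lemma nd_pos (s β : ℝ) (hs : 0 ≤ s) (hβ : 0 ≤ β) (i j : ℕ+) : 0 < nd s β i j :=
  lt_of_lt_of_le one_pos (one_le_nd s β hs hβ i j)

lemma nd_decomp (s β : ℝ) (hβs : 2*β ≤ s) (i j : ℕ+) :
    nd s β i j = Wf i j ^ (2*β) * w i j ^ (s - 2*β) := by
  have hm : (0:ℝ) ≤ min (i:ℝ) (j:ℝ) := le_trans zero_le_one (one_le_min i j)
  have hw : (0:ℝ) < w i j := w_pos i j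
  have hsq : (0:ℝ) ≤ Real.sqrt (min (i:ℝ) (j:ℝ)) := Real.sqrt_nonneg _
  rw [Wf_eq, Real.mul_rpow hsq (le_of_lt hw)]
  have h1 : Real.sqrt (min (i:ℝ) (j:ℝ)) ^ (2*β) = (min (i:ℝ) (j:ℝ)) ^ β := by
    rw [Real.rpow_mul hsq 2 β]
    congr 1
    rw [show ((2:ℝ)) = ((2:ℕ):ℝ) by norm_num, Real.rpow_natCast, Real.sq_sqrt hm]
  rw [h1, mul_assoc, ← Real.rpow_add hw, nd]
  ring_nf

lemma pn_le {i j : ℕ+} (h : i ≤ j) : (i:ℝ) ≤ (j:ℝ) := by exact_mod_cast h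

lemma abs_sub_of_le {i j : ℕ+} (h : i ≤ j) : |(i:ℝ) - (j:ℝ)| = (j:ℝ) - (i:ℝ) := by
  rw [abs_sub_comm, abs_of_nonneg (sub_nonneg.2 (pn_le h))]

lemma w_def (i j : ℕ+) : w i j = Wf i j / Real.sqrt (min (i:ℝ) (j:ℝ)) := rfl

lemma Wf_le {i j : ℕ+} (h : i ≤ j) : Wf i j = Real.sqrt (i:ℝ) + ((j:ℝ) - (i:ℝ)) := by
  rw [Wf, min_eq_left (pn_le h), abs_sub_of_le h]

lemma Wf_ge {i j : ℕ+} (h : j ≤ i) : Wf i j = Real.sqrt (j:ℝ) + ((i:ℝ) - (j:ℝ)) := by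
  rw [Wf_symm]; exact Wf_le h

lemma one_le_sqrt_pn (i : ℕ+) : (1:ℝ) ≤ Real.sqrt (i:ℝ) := by
  rw [show (1:ℝ) = Real.sqrt 1 by simp]; exact Real.sqrt_le_sqrt (pn_one_le i)

lemma sq_sqrt_pn (i : ℕ+) : Real.sqrt (i:ℝ) ^ 2 = (i:ℝ) := Real.sq_sqrt (by positivity)

lemma k1_iff (i j k : ℕ+) : w i j ≤ w i k * w k j ↔
    Wf i j * (Real.sqrt (min (i:ℝ) (k:ℝ)) * Real.sqrt (min (k:ℝ) (j:ℝ))) ≤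
      Wf i k * Wf k j * Real.sqrt (min (i:ℝ) (j:ℝ)) := by
  have h1 := sqrt_min_pos i j
  have h2 := sqrt_min_pos i k
  have h3 := sqrt_min_pos k j
  rw [w_def, w_def, w_def, div_mul_div_comm, div_le_div_iff₀ h1 (mul_pos h2 h3)]

lemma k1_aux {i j k : ℕ+} (hij : i ≤ j) : w i j ≤ w i k * w k j := by
  rw [k1_iff]
  have hij' := pn_le hij
  rcases le_total k i with hki | hik
  · -- k ≤ i ≤ j
    have hki' := pn_le hki
    have hkj : k ≤ j := le_trans hki hij
    rw [min_eq_left hij', min_eq_right (pn_le hki), min_eq_left (pn_le hkj),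
      Wf_le hij, Wf_ge hki, Wf_le hkj]
    set x := Real.sqrt (i:ℝ) with hx
    set y := Real.sqrt (k:ℝ) with hy
    have hx2 : x^2 = (i:ℝ) := sq_sqrt_pn i
    have hy2 : y^2 = (k:ℝ) := sq_sqrt_pn k
    have h1y : 1 ≤ y := one_le_sqrt_pn k
    have h1x : 1 ≤ x := one_le_sqrt_pn i
    have hyx : y ≤ x := Real.sqrt_le_sqrt hki'
    have hxyp : x ≤ y + ((i:ℝ) - (k:ℝ)) := by nlinarith [mul_nonneg (sub_nonneg.2 hyx) (by nlinarith : (0:ℝ) ≤ x + y - 1)]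
    have hD : (0:ℝ) ≤ (j:ℝ) - (i:ℝ) := sub_nonneg.2 hij'
    have hp : (0:ℝ) ≤ (i:ℝ) - (k:ℝ) := sub_nonneg.2 hki'
    have h5 : x*(x + ((j:ℝ)-(i:ℝ))) ≤ (y + ((i:ℝ)-(k:ℝ)))*(y + ((j:ℝ)-(k:ℝ))) := by
      nlinarith [mul_nonneg (sub_nonneg.2 hxyp) (by nlinarith : (0:ℝ) ≤ x + ((j:ℝ)-(i:ℝ)))]
    nlinarith [mul_nonneg (mul_nonneg (sub_nonneg.2 hyx) (by nlinarith : (0:ℝ) ≤ x + y)) (by nlinarith : (0:ℝ) ≤ x + ((j:ℝ)-(i:ℝ))), mul_le_mul_of_nonneg_right h5 (by nlinarith : (0:ℝ) ≤ x)]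
  · rcases le_total j k with hjk | hkj
    · -- i ≤ j ≤ k
      have hik' := pn_le hik
      have hjk' := pn_le hjk
      rw [min_eq_left hij', min_eq_left hik', min_eq_right hjk',
        Wf_le hij, Wf_le hik, Wf_ge hjk]
      set x := Real.sqrt (i:ℝ)
      set u := Real.sqrt (j:ℝ)
      have h1x : 1 ≤ x := one_le_sqrt_pn i
      have h1u : 1 ≤ u := one_le_sqrt_pn j
      nlinarith [sub_nonneg.2 hij', sub_nonneg.2 (le_trans hij' hjk'), sub_nonneg.2 hjk',
        mul_nonneg (sub_nonneg.2 hjk') (by nlinarith : (0:ℝ) ≤ x), mul_nonneg (sub_nonneg.2 hjk') (by nlinarith : (0:ℝ) ≤ u),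
        mul_nonneg (sub_nonneg.2 hjk') (sub_nonneg.2 hij'), mul_nonneg (sub_nonneg.2 hjk') (sub_nonneg.2 hjk')]
    · -- i ≤ k ≤ j
      have hik' := pn_le hik
      have hkj' := pn_le hkj
      rw [min_eq_left hij', min_eq_left hik', min_eq_left hkj',
        Wf_le hij, Wf_le hik, Wf_le hkj]
      set x := Real.sqrt (i:ℝ)
      set y := Real.sqrt (k:ℝ)
      have hx2 : x^2 = (i:ℝ) := sq_sqrt_pn i
      have hy2 : y^2 = (k:ℝ) := sq_sqrt_pn k
      have h1x : 1 ≤ x := one_le_sqrt_pn i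
      have h1y : 1 ≤ y := one_le_sqrt_pn k
      have hxy : x ≤ y := Real.sqrt_le_sqrt hik'
      have hyxp : y ≤ x + ((k:ℝ) - (i:ℝ)) := by nlinarith [mul_nonneg (sub_nonneg.2 hxy) (by nlinarith : (0:ℝ) ≤ x + y - 1)]
      have hq : (0:ℝ) ≤ (j:ℝ) - (k:ℝ) := sub_nonneg.2 hkj'
      nlinarith [mul_nonneg hq (sub_nonneg.2 hyxp), mul_nonneg (mul_nonneg hq (sub_nonneg.2 hyxp)) (by nlinarith : (0:ℝ) ≤ x)]

lemma k1 (i j k : ℕ+) : w i j ≤ w i k * w k j := by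
  rcases le_total i j with h | h
  · exact k1_aux h
  · rw [w_symm, mul_comm, w_symm i k, w_symm k j]
    exact k1_aux h

lemma pn_eq_of_cast {i j : ℕ+} (h : (i:ℝ) = (j:ℝ)) : i = j := by
  have : (i:ℕ) = (j:ℕ) := by exact_mod_cast h
  exact PNat.coe_injective this

lemma pn_cast_add_one_le {i k : ℕ+} (h : i < k) : (i:ℝ) + 1 ≤ (k:ℝ) := by
  have : (i:ℕ) + 1 ≤ (k:ℕ) := h
  exact_mod_cast this

/-- Key geometric inequality: if `|k-j| ≤ |i-k|` then `W(i,j)(2+|k-j|) ≤ 2 W(i,k) W(k,j)`. -/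
lemma k2 {i j k : ℕ+} (hq : |(k:ℝ)-(j:ℝ)| ≤ |(i:ℝ)-(k:ℝ)|) :
    Wf i j * (2 + |(k:ℝ)-(j:ℝ)|) ≤ 2 * (Wf i k * Wf k j) := by
  rcases le_total i j with hij | hji
  · have hij' := pn_le hij
    rcases lt_or_ge k i with hki | hik
    · -- k < i ≤ j : forces i = j
      have hki' := pn_le hki.le
      have hkj : k ≤ j := le_trans hki.le hij
      have hq' : (j:ℝ) - (k:ℝ) ≤ (i:ℝ) - (k:ℝ) := by
        rwa [abs_sub_of_le hkj, abs_sub_comm (i:ℝ) (k:ℝ), abs_sub_of_le hki.le] at hq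
      have heq : i = j := le_antisymm hij (by exact_mod_cast (by linarith : (j:ℝ) ≤ (i:ℝ)) : (j:ℕ) ≤ (i:ℕ))
      subst heq
      rw [abs_sub_of_le hkj, Wf_le le_rfl, Wf_ge hki.le, Wf_symm k i, Wf_ge hki.le]
      set z := Real.sqrt (i:ℝ)
      set y := Real.sqrt (k:ℝ)
      have hz2 : z^2 = (i:ℝ) := sq_sqrt_pn i
      have hy2 : y^2 = (k:ℝ) := sq_sqrt_pn k
      have h1y : 1 ≤ y := one_le_sqrt_pn k
      have h1z : 1 ≤ z := one_le_sqrt_pn i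
      have hyz : y ≤ z := Real.sqrt_le_sqrt hki'
      have hzyp : z ≤ y + ((i:ℝ) - (k:ℝ)) := by
        nlinarith [mul_nonneg (sub_nonneg.2 hyz) (by nlinarith : (0:ℝ) ≤ z + y - 1)]
      have hp : (0:ℝ) ≤ (i:ℝ) - (k:ℝ) := sub_nonneg.2 hki'
      nlinarith [mul_le_mul_of_nonneg_right hzyp (by linarith : (0:ℝ) ≤ 2 + ((i:ℝ)-(k:ℝ))),
        mul_nonneg (by linarith : (0:ℝ) ≤ y + ((i:ℝ)-(k:ℝ))) (by linarith : (0:ℝ) ≤ 2*y + ((i:ℝ)-(k:ℝ)) - 2)]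
    · rcases le_total k j with hkj | hjk
      · -- i ≤ k ≤ j : middle case
        have hik' := pn_le hik
        have hkj' := pn_le hkj
        have hq' : (j:ℝ) - (k:ℝ) ≤ (k:ℝ) - (i:ℝ) := by
          rwa [abs_sub_of_le hkj, abs_sub_of_le hik] at hq
        rw [abs_sub_of_le hkj, Wf_le hij, Wf_le hik, Wf_le hkj]
        set z := Real.sqrt (i:ℝ)
        set y := Real.sqrt (k:ℝ)
        have hz2 : z^2 = (i:ℝ) := sq_sqrt_pn i
        have hy2 : y^2 = (k:ℝ) := sq_sqrt_pn k
        have h1z : 1 ≤ z := one_le_sqrt_pn i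
        have h1y : 1 ≤ y := one_le_sqrt_pn k
        have hzy : z ≤ y := Real.sqrt_le_sqrt hik'
        have hq0 : (0:ℝ) ≤ (j:ℝ) - (k:ℝ) := sub_nonneg.2 hkj'
        have hp0 : (0:ℝ) ≤ (k:ℝ) - (i:ℝ) := sub_nonneg.2 hik'
        rcases eq_or_lt_of_le hik with heq | hlt
        · -- i = k : then q ≤ 0 so k = j too
          subst heq
          have : (j:ℝ) = (i:ℝ) := by linarith
          have heq2 : j = i := pn_eq_of_cast this
          subst heq2
          nlinarith
        · -- i < k, so p ≥ 1
          have hp1 : (1:ℝ) ≤ (k:ℝ) - (i:ℝ) := by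
            have := pn_cast_add_one_le hlt; linarith
          rcases le_or_gt 2 z with h2z | hz2'
          · nlinarith [mul_nonneg hq0 (by linarith : (0:ℝ) ≤ ((k:ℝ)-(i:ℝ)) - ((j:ℝ)-(k:ℝ))),
              mul_nonneg (by nlinarith : (0:ℝ) ≤ z + ((k:ℝ)-(i:ℝ))) (sub_nonneg.2 h1y),
              mul_nonneg hq0 (by linarith : (0:ℝ) ≤ z - 2)]
          · -- 1 ≤ z < 2
            set p := (k:ℝ) - (i:ℝ) with hp
            set q := (j:ℝ) - (k:ℝ) with hqd
            have hyb : y ≤ 1 + 2*p := by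
              have h4 : (k:ℝ) ≤ (1+2*p)^2 := by nlinarith
              calc y = Real.sqrt (k:ℝ) := rfl
                _ ≤ Real.sqrt ((1+2*p)^2) := Real.sqrt_le_sqrt h4
                _ = 1+2*p := Real.sqrt_sq (by linarith)
            have hz1 : 1 ≤ z^2 := by nlinarith
            have hkey : (2*(1+p)*(y-1) - p) * (y+1) ≥ 0 := by
              nlinarith [mul_nonneg (by linarith : (0:ℝ) ≤ 1+p) (by nlinarith : (0:ℝ) ≤ y^2 - 1 - p),
                mul_nonneg hp0 (by linarith : (0:ℝ) ≤ 1 + 2*p - y)]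
            have h2 : p ≤ 2*(1+p)*(y-1) := by
              nlinarith [hkey, (by linarith : (0:ℝ) < y + 1)]
            have h3 : 2*(1+p)*(y-1) ≤ 2*(z+p)*(y-1) := by
              nlinarith [mul_nonneg (sub_nonneg.2 h1z) (sub_nonneg.2 h1y)]
            nlinarith [h2, h3, mul_nonneg hq0 (by linarith : (0:ℝ) ≤ z - 1),
              mul_nonneg hq0 (by linarith : (0:ℝ) ≤ p - q)]
      · -- i ≤ j < k
        have hik' := pn_le hik
        have hjk' := pn_le hjk
        rw [abs_sub_comm (k:ℝ) (j:ℝ), abs_sub_of_le hjk, Wf_le hij, Wf_le hik, Wf_symm k j, Wf_le hjk]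
        set z := Real.sqrt (i:ℝ)
        set u := Real.sqrt (j:ℝ)
        have h1z : 1 ≤ z := one_le_sqrt_pn i
        have h1u : 1 ≤ u := one_le_sqrt_pn j
        have hq0 : (0:ℝ) ≤ (k:ℝ) - (j:ℝ) := sub_nonneg.2 hjk'
        have hD0 : (0:ℝ) ≤ (j:ℝ) - (i:ℝ) := sub_nonneg.2 hij'
        -- (z+D)(2+q) ≤ (z+p)(2+q) ≤ 2(z+p)(u+q),  p = D+q
        have h5 : z + ((j:ℝ)-(i:ℝ)) ≤ z + ((k:ℝ)-(i:ℝ)) := by linarith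
        have h6 : (z + ((j:ℝ)-(i:ℝ))) * (2 + ((k:ℝ)-(j:ℝ))) ≤ (z + ((k:ℝ)-(i:ℝ))) * (2 + ((k:ℝ)-(j:ℝ))) :=
          mul_le_mul_of_nonneg_right h5 (by linarith)
        have h7 : (z + ((k:ℝ)-(i:ℝ))) * (2 + ((k:ℝ)-(j:ℝ))) ≤ (z + ((k:ℝ)-(i:ℝ))) * (2*(u + ((k:ℝ)-(j:ℝ)))) :=
          mul_le_mul_of_nonneg_left (by linarith) (by linarith)
        nlinarith [h6, h7]
  · -- j ≤ i
    have hji' := pn_le hji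
    rcases le_total j k with hjk | hkj
    · -- j ≤ k
      have hjk' := pn_le hjk
      rcases le_or_gt k i with hki | hik
      · -- j ≤ k ≤ i
        have hki' := pn_le hki
        have hq' : (k:ℝ) - (j:ℝ) ≤ (i:ℝ) - (k:ℝ) := by
          rwa [abs_sub_comm (k:ℝ) (j:ℝ), abs_sub_of_le hjk, abs_sub_comm (i:ℝ) (k:ℝ), abs_sub_of_le hki] at hq
        rw [abs_sub_comm (k:ℝ) (j:ℝ), abs_sub_of_le hjk, Wf_symm i j, Wf_le hji, Wf_ge hki, Wf_symm k j, Wf_le hjk]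
        set x := Real.sqrt (k:ℝ)
        set z := Real.sqrt (j:ℝ)
        have hx2 : x^2 = (k:ℝ) := sq_sqrt_pn k
        have hz2 : z^2 = (j:ℝ) := sq_sqrt_pn j
        have h1x : 1 ≤ x := one_le_sqrt_pn k
        have h1z : 1 ≤ z := one_le_sqrt_pn j
        have hzx : z ≤ x := Real.sqrt_le_sqrt hjk'
        have hq0 : (0:ℝ) ≤ (k:ℝ) - (j:ℝ) := sub_nonneg.2 hjk'
        have hp0 : (0:ℝ) ≤ (i:ℝ) - (k:ℝ) := sub_nonneg.2 hki'
        set p := (i:ℝ) - (k:ℝ) with hpd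
        set q := (k:ℝ) - (j:ℝ) with hqd
        rcases le_or_gt 2 x with h2x | hx2'
        · nlinarith [mul_nonneg hq0 (by linarith : (0:ℝ) ≤ 2*x - z - 2),
            mul_nonneg hq0 (by linarith : (0:ℝ) ≤ p - q),
            mul_nonneg (by linarith : (0:ℝ) ≤ z) (by linarith : (0:ℝ) ≤ x - 1),
            mul_nonneg hp0 (by linarith : (0:ℝ) ≤ z - 1)]
        · have ha : q*(2-x) ≤ (x^2-1)*(2-x) := by
            nlinarith [mul_nonneg (by nlinarith : (0:ℝ) ≤ z^2 - 1) (by linarith : (0:ℝ) ≤ 2 - x)]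
          have hb : (x^2-1)*(2-x) ≤ 2*(x-1) := by
            nlinarith [mul_nonneg (by linarith : (0:ℝ) ≤ x) (sq_nonneg (x-1))]
          have hc : 2*(x-1) ≤ 2*z*(x-1) := by
            nlinarith [mul_nonneg (sub_nonneg.2 h1z) (sub_nonneg.2 h1x)]
          nlinarith [ha, hb, hc, mul_nonneg hq0 (by linarith : (0:ℝ) ≤ x - z),
            mul_nonneg hq0 (by linarith : (0:ℝ) ≤ p - q),
            mul_nonneg hp0 (by linarith : (0:ℝ) ≤ z - 1)]
      · -- j ≤ i < k
        have hik' := pn_le hik.le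
        have hq' : (k:ℝ) - (j:ℝ) ≤ (k:ℝ) - (i:ℝ) := by
          rwa [abs_sub_comm (k:ℝ) (j:ℝ), abs_sub_of_le hjk, abs_sub_of_le hik.le] at hq
        -- forces i = j
        have heq : j = i := pn_eq_of_cast (le_antisymm hji' (by linarith))
        subst heq
        rw [abs_sub_comm (k:ℝ) (j:ℝ), abs_sub_of_le hjk, Wf_le le_rfl, Wf_le hjk, Wf_symm k j, Wf_le hjk]
        set z := Real.sqrt (j:ℝ)
        have h1z : 1 ≤ z := one_le_sqrt_pn j
        have hq0 : (0:ℝ) ≤ (k:ℝ) - (j:ℝ) := sub_nonneg.2 hjk'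
        nlinarith [mul_nonneg hq0 hq0, mul_nonneg (sub_nonneg.2 h1z) hq0, mul_nonneg (sub_nonneg.2 h1z) (sub_nonneg.2 h1z)]
    · -- k < j ≤ i
      have hkj' := pn_le hkj
      have hki : k ≤ i := le_trans hkj hji
      have hki' := pn_le hki
      rw [abs_sub_of_le hkj, Wf_symm i j, Wf_le hji, Wf_ge hki, Wf_symm k j, Wf_ge hkj]
      set x := Real.sqrt (k:ℝ)
      set z := Real.sqrt (j:ℝ)
      have hx2 : x^2 = (k:ℝ) := sq_sqrt_pn k
      have hz2 : z^2 = (j:ℝ) := sq_sqrt_pn j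
      have h1x : 1 ≤ x := one_le_sqrt_pn k
      have h1z : 1 ≤ z := one_le_sqrt_pn j
      have hxz : x ≤ z := Real.sqrt_le_sqrt hkj'
      have hzxq : z ≤ x + ((j:ℝ) - (k:ℝ)) := by
        nlinarith [mul_nonneg (sub_nonneg.2 hxz) (by nlinarith : (0:ℝ) ≤ z + x - 1)]
      have hq0 : (0:ℝ) ≤ (j:ℝ) - (k:ℝ) := sub_nonneg.2 hkj'
      have hD0 : (0:ℝ) ≤ (i:ℝ) - (j:ℝ) := sub_nonneg.2 hji'
      have h5 : z + ((i:ℝ)-(j:ℝ)) ≤ x + ((i:ℝ)-(k:ℝ)) := by linarith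
      have h6 : (z + ((i:ℝ)-(j:ℝ))) * (2 + ((j:ℝ)-(k:ℝ))) ≤ (x + ((i:ℝ)-(k:ℝ))) * (2 + ((j:ℝ)-(k:ℝ))) :=
        mul_le_mul_of_nonneg_right h5 (by linarith)
      have h7 : (x + ((i:ℝ)-(k:ℝ))) * (2 + ((j:ℝ)-(k:ℝ))) ≤ (x + ((i:ℝ)-(k:ℝ))) * (2*(x + ((j:ℝ)-(k:ℝ)))) :=
        mul_le_mul_of_nonneg_left (by linarith) (by linarith)
      nlinarith [h6, h7]

/-- Bernoulli-type: `(1-y)^(-p) ≥ 1 + p y`. -/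
lemma bern {p y : ℝ} (hp : 0 < p) (hy0 : 0 ≤ y) (hy1 : y < 1) :
    1 + p * y ≤ (1 - y) ^ (-p) := by
  have h1y : 0 < 1 - y := by linarith
  rw [Real.rpow_def_of_pos h1y]
  have hlog : Real.log (1 - y) ≤ -y := by
    have := Real.log_le_sub_one_of_pos h1y
    linarith
  have h2 : p * y ≤ Real.log (1 - y) * (-p) := by nlinarith
  calc 1 + p * y = p * y + 1 := by ring
    _ ≤ Real.exp (p * y) := Real.add_one_le_exp _
    _ ≤ _ := Real.exp_le_exp.2 h2

/-- telescoping bound: for `g > 0`, `t ≥ 1`,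
`((1+t)^g)⁻¹/(1+t) ≤ g⁻¹ (t^{-g} - (1+t)^{-g})`. -/
lemma tele_step {g t : ℝ} (hg : 0 < g) (ht : 1 ≤ t) :
    ((1+t) ^ g)⁻¹ * (1+t)⁻¹ ≤ g⁻¹ * ((t ^ g)⁻¹ - ((1+t) ^ g)⁻¹) := by
  have ht0 : (0:ℝ) < t := by linarith
  have ht1 : (0:ℝ) < 1 + t := by linarith
  have hbp := bern hg (by positivity : (0:ℝ) ≤ 1/(1+t)) (by rw [div_lt_one ht1]; linarith)
  have hsub : (1 : ℝ) - 1/(1+t) = t/(1+t) := by field_simp; ring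
  rw [hsub] at hbp
  have hp1 : (0:ℝ) < (1+t)^g := Real.rpow_pos_of_pos ht1 g
  have hp2 : (0:ℝ) < t^g := Real.rpow_pos_of_pos ht0 g
  have hrw : (t/(1+t)) ^ (-g) = (1+t)^g * (t^g)⁻¹ := by
    rw [Real.rpow_neg (by positivity), Real.div_rpow (le_of_lt ht0) (le_of_lt ht1), inv_div]
    rw [div_eq_mul_inv]
  rw [hrw] at hbp
  set a := (1+t)^g
  set b := t^g
  have ha0 : a ≠ 0 := ne_of_gt hp1
  have hb0 : b ≠ 0 := ne_of_gt hp2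
  have ht10 : (1+t) ≠ 0 := ne_of_gt ht1
  have h4 : b + g * (b * (1+t)⁻¹) ≤ a := by
    have h := mul_le_mul_of_nonneg_right hbp (le_of_lt hp2)
    have e : a * b⁻¹ * b = a := by field_simp
    rw [e] at h
    have e2 : (1 + g * (1/(1+t))) * b = b + g * (b * (1+t)⁻¹) := by field_simp
    linarith [e2 ▸ h]
  have h5 : g * (a⁻¹*(1+t)⁻¹) ≤ b⁻¹ - a⁻¹ := by
    have h6 : b⁻¹ - a⁻¹ - g*(a⁻¹*(1+t)⁻¹) = (a - b - g*(b*(1+t)⁻¹)) * (a⁻¹*b⁻¹*(1+t)*(1+t)⁻¹) := by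
      field_simp
    nlinarith [h6, mul_nonneg (by linarith : (0:ℝ) ≤ a - b - g*(b*(1+t)⁻¹))
      (by positivity : (0:ℝ) ≤ a⁻¹*b⁻¹*(1+t)*(1+t)⁻¹)]
  calc a⁻¹*(1+t)⁻¹ = g⁻¹*(g*(a⁻¹*(1+t)⁻¹)) := by field_simp
    _ ≤ g⁻¹*(b⁻¹-a⁻¹) := mul_le_mul_of_nonneg_left h5 (by positivity)

lemma tele_nat (τ : ℕ → ℝ) (hτnn : ∀ n, 1 ≤ n → 0 ≤ τ n)
    (hτmono : ∀ n, 1 ≤ n → τ (n+1) ≤ τ n)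
    (G : Finset ℕ) (hG : ∀ n ∈ G, 1 ≤ n) :
    ∑ n ∈ G, (τ n - τ (n+1)) ≤ τ 1 := by
  classical
  set N := G.sup id with hN
  have hsub : G ⊆ Finset.Icc 1 N := by
    intro n hn
    exact Finset.mem_Icc.2 ⟨hG n hn, Finset.le_sup (f := id) hn⟩
  have h1 : ∑ n ∈ G, (τ n - τ (n+1)) ≤ ∑ n ∈ Finset.Icc 1 N, (τ n - τ (n+1)) :=
    Finset.sum_le_sum_of_subset_of_nonneg hsub
      (fun n hn _ => sub_nonneg.2 (hτmono n (Finset.mem_Icc.1 hn).1))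
  rcases Nat.eq_zero_or_pos N with h0 | hpos
  · rw [h0] at h1
    simp only [Finset.Icc_eq_empty_of_lt (by norm_num : (0:ℕ) < 1), Finset.sum_empty] at h1
    exact le_trans h1 (hτnn 1 le_rfl)
  · have h2 : ∑ n ∈ Finset.Icc 1 N, (τ n - τ (n+1)) = τ 1 - τ (1 + N) := by
      rw [← Finset.Ico_add_one_right_eq_Icc, Finset.sum_Ico_eq_sum_range]
      exact Finset.sum_range_sub' (fun i => τ (1+i)) N
    rw [h2] at h1
    have := hτnn (1+N) (by omega)
    linarith

lemma pn_dist_ne {k c : ℕ+} (h : k ≠ c) : 1 ≤ Nat.dist (k:ℕ) (c:ℕ) := by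
  have : (k:ℕ) ≠ (c:ℕ) := fun hh => h (PNat.coe_injective hh)
  simp [Nat.dist]; omega

lemma center_sum (τ : ℕ → ℝ) (hτnn : ∀ n, 1 ≤ n → 0 ≤ τ n)
    (hτmono : ∀ n, 1 ≤ n → τ (n+1) ≤ τ n)
    (c : ℕ+) (h : ℕ+ → ℝ) (hnn : ∀ k, 0 ≤ h k) (hc : h c ≤ 1)
    (hb : ∀ k : ℕ+, k ≠ c → h k ≤ τ (Nat.dist (k:ℕ) (c:ℕ)) - τ (Nat.dist (k:ℕ) (c:ℕ) + 1))
    (F : Finset ℕ+) : ∑ k ∈ F, h k ≤ 1 + 2 * τ 1 := by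
  classical
  have hτ1 : 0 ≤ τ 1 := hτnn 1 le_rfl
  have side : ∀ (G : Finset ℕ+), (∀ k ∈ G, k ≠ c) →
      (∀ k1 ∈ G, ∀ k2 ∈ G, Nat.dist (k1:ℕ) (c:ℕ) = Nat.dist (k2:ℕ) (c:ℕ) → k1 = k2) →
      ∑ k ∈ G, h k ≤ τ 1 := by
    intro G hGne hGinj
    calc ∑ k ∈ G, h k
        ≤ ∑ k ∈ G, (τ (Nat.dist (k:ℕ) (c:ℕ)) - τ (Nat.dist (k:ℕ) (c:ℕ) + 1)) :=
          Finset.sum_le_sum (fun k hk => hb k (hGne k hk))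
      _ = ∑ n ∈ G.image (fun k : ℕ+ => Nat.dist (k:ℕ) (c:ℕ)), (τ n - τ (n+1)) :=
          (Finset.sum_image (g := fun k : ℕ+ => Nat.dist (k:ℕ) (c:ℕ)) (f := fun n => τ n - τ (n+1)) hGinj).symm
      _ ≤ τ 1 := by
          apply tele_nat τ hτnn hτmono
          intro n hn
          obtain ⟨k, hk, rfl⟩ := Finset.mem_image.1 hn
          exact pn_dist_ne (hGne k hk)
  -- split F
  have split1 := Finset.sum_filter_add_sum_filter_not F (fun k => k = c) h
  have hcenter : ∑ k ∈ F.filter (fun k => k = c), h k ≤ 1 := by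
    have hsub : F.filter (fun k => k = c) ⊆ {c} := by
      intro k hk
      rcases Finset.mem_filter.1 hk with ⟨_, rfl⟩
      exact Finset.mem_singleton_self _
    calc ∑ k ∈ F.filter (fun k => k = c), h k ≤ ∑ k ∈ ({c} : Finset ℕ+), h k :=
          Finset.sum_le_sum_of_subset_of_nonneg hsub (fun k _ _ => hnn k)
      _ = h c := Finset.sum_singleton _ _
      _ ≤ 1 := hc
  set G := F.filter (fun k => ¬ k = c) with hG
  have split2 := Finset.sum_filter_add_sum_filter_not G (fun k => k < c) h
  have hGne : ∀ k ∈ G, k ≠ c := fun k hk => (Finset.mem_filter.1 hk).2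
  have hleft : ∑ k ∈ G.filter (fun k => k < c), h k ≤ τ 1 := by
    apply side
    · intro k hk; exact hGne k (Finset.mem_filter.1 hk).1
    · intro k1 h1 k2 h2 he
      have l1 : (k1:ℕ) < (c:ℕ) := (Finset.mem_filter.1 h1).2
      have l2 : (k2:ℕ) < (c:ℕ) := (Finset.mem_filter.1 h2).2
      apply PNat.coe_injective
      simp [Nat.dist] at he
      omega
  have hright : ∑ k ∈ G.filter (fun k => ¬ k < c), h k ≤ τ 1 := by
    apply side
    · intro k hk; exact hGne k (Finset.mem_filter.1 hk).1
    · intro k1 h1 k2 h2 he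
      have l1 : ¬ (k1 < c) := (Finset.mem_filter.1 h1).2
      have l2 : ¬ (k2 < c) := (Finset.mem_filter.1 h2).2
      have l1' : (c:ℕ) ≤ (k1:ℕ) := by exact_mod_cast le_of_not_gt l1
      have l2' : (c:ℕ) ≤ (k2:ℕ) := by exact_mod_cast le_of_not_gt l2
      apply PNat.coe_injective
      simp [Nat.dist] at he
      omega
  linarith

lemma sqrt2_lt : Real.sqrt 2 ≤ 1.41422 := by
  rw [show (1.41422:ℝ) = Real.sqrt (1.41422^2) from (Real.sqrt_sq (by norm_num)).symm]
  exact Real.sqrt_le_sqrt (by norm_num)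

lemma numA {β : ℝ} (hβ : 0 < β) (hβ1 : β ≤ 1) : (6:ℝ) ≤ 4 * 2^β / β := by
  rw [le_div_iff₀ hβ]
  have he : (2:ℝ)^β = Real.exp (Real.log 2 * β) := Real.rpow_def_of_pos (by norm_num) β
  have hexp := Real.add_one_le_exp (Real.log 2 * β)
  have hlog := Real.log_two_gt_d9
  nlinarith [mul_nonneg (by linarith : (0:ℝ) ≤ Real.log 2 - 0.6931471803) (le_of_lt hβ)]

lemma numB {β : ℝ} (hβ : 0 < β) (h2β : 2*β ≤ 1) :
    2 + 4 * (2^(2*β) / (2*β)) ≤ 4 * 2^β / β := by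
  have hu1 : (1:ℝ) ≤ 2^β := Real.one_le_rpow (by norm_num) (le_of_lt hβ)
  have hu2 : (2:ℝ)^β ≤ 1.41422 := by
    calc (2:ℝ)^β ≤ 2^(1/2:ℝ) :=
          Real.rpow_le_rpow_of_exponent_le (by norm_num) (by linarith)
      _ = Real.sqrt 2 := (Real.sqrt_eq_rpow 2).symm
      _ ≤ 1.41422 := sqrt2_lt
  have hsq : (2:ℝ)^(2*β) = (2^β)^2 := by
    rw [show (2:ℝ)*β = β*2 by ring, Real.rpow_mul (by norm_num : (0:ℝ) ≤ 2)]
    rw [show ((2:ℝ)) = ((2:ℕ):ℝ) by norm_num, Real.rpow_natCast]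
  have hlogu : Real.log (2^β : ℝ) = β * Real.log 2 := Real.log_rpow (by norm_num) β
  have hlogle : Real.log (2^β : ℝ) ≤ 2^β - 1 :=
    Real.log_le_sub_one_of_pos (by positivity)
  have hlog := Real.log_two_gt_d9
  set u := (2:ℝ)^β
  have hβu : β * 0.6931471803 ≤ u - 1 := by
    nlinarith [mul_nonneg (le_of_lt hβ) (by linarith : (0:ℝ) ≤ Real.log 2 - 0.6931471803)]
  have key : 2*β + 2*u^2 ≤ 4*u := by
    nlinarith [mul_nonneg (by linarith : (0:ℝ) ≤ u - 1) (by linarith : (0:ℝ) ≤ 1.41422 - u), hβu]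
  calc 2 + 4 * (2^(2*β) / (2*β)) = (2*β + 2*u^2)/β := by rw [hsq]; field_simp; ring
    _ ≤ 4 * u / β := by gcongr


lemma dist_cast (k c : ℕ+) : ((Nat.dist (k:ℕ) (c:ℕ)):ℝ) = |(k:ℝ) - (c:ℝ)| := by
  rcases le_total (k:ℕ) (c:ℕ) with h | h
  · rw [Nat.dist_eq_sub_of_le h, abs_sub_comm, abs_of_nonneg
      (sub_nonneg.2 (by exact_mod_cast h : (k:ℝ) ≤ (c:ℝ)))]
    push_cast [h]
    ring
  · rw [Nat.dist_eq_sub_of_le_right h, abs_of_nonneg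
      (sub_nonneg.2 (by exact_mod_cast h : (c:ℝ) ≤ (k:ℝ)))]
    push_cast [h]
    ring

/-- Core pointwise estimate. -/
lemma core (s β : ℝ) (hβ : 0 < β) (hβs : 2*β ≤ s) {i j k : ℕ+}
    (h : |(k:ℝ)-(j:ℝ)| ≤ |(i:ℝ)-(k:ℝ)|) :
    nd s β i j ≤ (2/(2+|(k:ℝ)-(j:ℝ)|))^(2*β) * (nd s β i k * nd s β k j) := by
  have hσ : 0 ≤ s - 2*β := by linarith
  set q := |(k:ℝ)-(j:ℝ)| with hqdef
  have hq0 : 0 ≤ q := abs_nonneg _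
  have hc0 : (0:ℝ) < 2+q := by linarith
  have hW : Wf i j ≤ 2/(2+q) * (Wf i k * Wf k j) := by
    rw [div_mul_eq_mul_div, le_div_iff₀ hc0]
    have := k2 h
    linarith
  have hb0 : (0:ℝ) ≤ 2*β := by linarith
  have hWik := Wf_pos i k
  have hWkj := Wf_pos k j
  have hWp : Wf i j^(2*β) ≤ (2/(2+q))^(2*β) * (Wf i k^(2*β) * Wf k j^(2*β)) := by
    calc Wf i j^(2*β) ≤ (2/(2+q) * (Wf i k * Wf k j))^(2*β) :=
          Real.rpow_le_rpow (le_of_lt (Wf_pos i j)) hW hb0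
      _ = (2/(2+q))^(2*β) * (Wf i k * Wf k j)^(2*β) :=
          Real.mul_rpow (by positivity) (by nlinarith : (0:ℝ) ≤ Wf i k * Wf k j)
      _ = (2/(2+q))^(2*β) * (Wf i k^(2*β) * Wf k j^(2*β)) := by
          rw [Real.mul_rpow (le_of_lt hWik) (le_of_lt hWkj)]
  have hwp : w i j^(s-2*β) ≤ w i k^(s-2*β) * w k j^(s-2*β) := by
    calc w i j^(s-2*β) ≤ (w i k * w k j)^(s-2*β) :=
          Real.rpow_le_rpow (le_of_lt (w_pos i j)) (k1 i j k) hσ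
      _ = _ := Real.mul_rpow (le_of_lt (w_pos i k)) (le_of_lt (w_pos k j))
  rw [nd_decomp s β hβs i j, nd_decomp s β hβs i k, nd_decomp s β hβs k j]
  calc Wf i j^(2*β) * w i j^(s-2*β)
      ≤ ((2/(2+q))^(2*β) * (Wf i k^(2*β) * Wf k j^(2*β))) * (w i k^(s-2*β) * w k j^(s-2*β)) := by
        apply mul_le_mul hWp hwp (Real.rpow_nonneg (le_of_lt (w_pos i j)) _)
        have h1 : (0:ℝ) ≤ (2/(2+q))^(2*β) := Real.rpow_nonneg (by positivity) _
        have h2 : (0:ℝ) ≤ Wf i k^(2*β) := Real.rpow_nonneg (le_of_lt hWik) _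
        have h3 : (0:ℝ) ≤ Wf k j^(2*β) := Real.rpow_nonneg (le_of_lt hWkj) _
        positivity
    _ = (2/(2+q))^(2*β) * (Wf i k ^ (2*β) * w i k ^ (s-2*β) * (Wf k j ^ (2*β) * w k j ^ (s-2*β))) := by
        ring

lemma numC {s β : ℝ} (hβ : 0 < β) (hβs : 2*β ≤ s) : 4 * 2^β / β ≤ 2^(s/2+2) / β := by
  have h1 : (2:ℝ)^β ≤ 2^(s/2) :=
    Real.rpow_le_rpow_of_exponent_le (by norm_num) (by linarith)
  have h3 : (2:ℝ)^(2:ℝ) = 4 := by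
    rw [show ((2:ℝ)) = ((2:ℕ):ℝ) by norm_num]
    rw [Real.rpow_natCast]
    norm_num
  have h2 : (2:ℝ)^(s/2+2) = 2^(s/2) * 4 := by
    rw [Real.rpow_add (by norm_num : (0:ℝ) < 2), h3]
  rw [h2]
  have h4 : (4:ℝ) * (2:ℝ)^β ≤ (2:ℝ)^(s/2) * 4 := by linarith
  exact (div_le_div_iff_of_pos_right hβ).2 h4

/-- THE key analytic lemma. -/
lemma key (s β : ℝ) (hβ : 0 < β) (hβ1 : β ≤ 1) (hβs : 2*β ≤ s) (i j : ℕ+) :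
    Summable (fun k : ℕ+ => (nd s β i k * (nd s β k j * (1 + |(k:ℝ) - (j:ℝ)|)))⁻¹) ∧
    nd s β i j * ∑' k : ℕ+, (nd s β i k * (nd s β k j * (1 + |(k:ℝ) - (j:ℝ)|)))⁻¹
      ≤ 2^(s/2+2) / β := by
  have hs0 : (0:ℝ) ≤ s := by linarith
  have hβ0 : (0:ℝ) ≤ β := le_of_lt hβ
  have hb0 : (0:ℝ) ≤ 2*β := by linarith
  have hNDpos : ∀ a b : ℕ+, 0 < nd s β a b := nd_pos s β hs0 hβ0
  have hND1 : ∀ a b : ℕ+, 1 ≤ nd s β a b := one_le_nd s β hs0 hβ0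
  set f : ℕ+ → ℝ := fun k => nd s β i j * (nd s β i k * (nd s β k j * (1 + |(k:ℝ) - (j:ℝ)|)))⁻¹
    with hfdef
  have hfnn : ∀ k, 0 ≤ f k := by
    intro k
    have h1 := hNDpos i k
    have h2 := hNDpos k j
    have h3 : (0:ℝ) < 1 + |(k:ℝ) - (j:ℝ)| := by positivity
    have := hNDpos i j
    positivity
  set gg : ℕ → ℝ := fun n => (2/(2+(n:ℝ)))^(2*β) * (1+(n:ℝ))⁻¹ with hggdef
  have hggnn : ∀ n, 0 ≤ gg n := by
    intro n
    have : (0:ℝ) ≤ (2/(2+(n:ℝ)))^(2*β) := Real.rpow_nonneg (by positivity) _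
    positivity
  -- pointwise bound
  have hpt : ∀ k : ℕ+, f k ≤ (if k = i then 1 else gg (Nat.dist (k:ℕ) (i:ℕ)))
      + (if k = j then 1 else gg (Nat.dist (k:ℕ) (j:ℕ))) := by
    intro k
    by_cases hkj : k = j
    · subst hkj
      have hfj : f k = (nd s β k k)⁻¹ := by
        rw [hfdef]
        simp only [sub_self, abs_zero, add_zero, mul_one]
        have ha := ne_of_gt (hNDpos i k)
        have hb := ne_of_gt (hNDpos k k)
        field_simp
        try ring
      rw [hfj]
      have hj1 : (if k = k then (1:ℝ) else gg (Nat.dist (k:ℕ) (k:ℕ))) = 1 := if_pos rfl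
      rw [hj1]
      have h1 : (nd s β k k)⁻¹ ≤ 1 := by
        rw [inv_le_one_iff₀]; right; exact hND1 k k
      have h2 : (0:ℝ) ≤ (if k = i then 1 else gg (Nat.dist (k:ℕ) (i:ℕ))) := by
        split <;> [norm_num; exact hggnn _]
      linarith
    · by_cases hki : k = i
      · subst hki
        have hfi : f k = (nd s β k k)⁻¹ * (1 + |(k:ℝ) - (j:ℝ)|)⁻¹ := by
          rw [hfdef]
          simp only []
          have ha := ne_of_gt (hNDpos k k)
          have hb := ne_of_gt (hNDpos k j)
          have hc : (1 + |(k:ℝ) - (j:ℝ)|) ≠ 0 := by positivity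
          field_simp
          try ring
        have h3 : (0:ℝ) < 1 + |(k:ℝ) - (j:ℝ)| := by positivity
        have h1 : f k ≤ 1 := by
          rw [hfi]
          have i1 : (nd s β k k)⁻¹ ≤ 1 := by
            rw [inv_le_one_iff₀]; right; exact hND1 k k
          have i2 : (1 + |(k:ℝ) - (j:ℝ)|)⁻¹ ≤ 1 := by
            rw [inv_le_one_iff₀]; right; linarith [abs_nonneg ((k:ℝ) - (j:ℝ))]
          calc (nd s β k k)⁻¹ * (1 + |(k:ℝ) - (j:ℝ)|)⁻¹ ≤ 1 * 1 :=
                mul_le_mul i1 i2 (by positivity) (by norm_num)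
            _ = 1 := by norm_num
        have hi1 : (if k = k then (1:ℝ) else gg (Nat.dist (k:ℕ) (k:ℕ))) = 1 := if_pos rfl
        rw [hi1]
        have h2 : (0:ℝ) ≤ (if k = j then 1 else gg (Nat.dist (k:ℕ) (j:ℕ))) := by
          split <;> [norm_num; exact hggnn _]
        linarith
      · -- k ≠ i, k ≠ j
        rw [if_neg hki, if_neg hkj]
        have hq0 : (0:ℝ) ≤ |(k:ℝ) - (j:ℝ)| := abs_nonneg _
        have hp0 : (0:ℝ) ≤ |(i:ℝ) - (k:ℝ)| := abs_nonneg _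
        have h1pq : (0:ℝ) < 1 + |(k:ℝ) - (j:ℝ)| := by linarith
        have hden : (0:ℝ) < nd s β i k * (nd s β k j * (1 + |(k:ℝ) - (j:ℝ)|)) := by
          have := hNDpos i k; have := hNDpos k j; positivity
        rcases le_total (|(k:ℝ) - (j:ℝ)|) (|(i:ℝ) - (k:ℝ)|) with hcase | hcase
        · -- use decay at j
          have hcore := core s β hβ hβs hcase
          have hfb : f k ≤ (2/(2+|(k:ℝ)-(j:ℝ)|))^(2*β) * (1 + |(k:ℝ) - (j:ℝ)|)⁻¹ := by
            rw [hfdef]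
            simp only []
            rw [mul_inv_le_iff₀ hden]
            calc nd s β i j ≤ (2/(2+|(k:ℝ)-(j:ℝ)|))^(2*β) * (nd s β i k * nd s β k j) := hcore
              _ ≤ ((2/(2+|(k:ℝ)-(j:ℝ)|))^(2*β) * (1 + |(k:ℝ) - (j:ℝ)|)⁻¹)
                  * (nd s β i k * (nd s β k j * (1 + |(k:ℝ) - (j:ℝ)|))) := by
                  rw [show ((2/(2+|(k:ℝ)-(j:ℝ)|))^(2*β) * (1 + |(k:ℝ) - (j:ℝ)|)⁻¹)
                      * (nd s β i k * (nd s β k j * (1 + |(k:ℝ) - (j:ℝ)|)))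
                      = ((2/(2+|(k:ℝ)-(j:ℝ)|))^(2*β) * (nd s β i k * nd s β k j))
                        * ((1 + |(k:ℝ) - (j:ℝ)|)⁻¹ * (1 + |(k:ℝ) - (j:ℝ)|)) by ring]
                  rw [inv_mul_cancel₀ (ne_of_gt h1pq), mul_one]
          have hgg : (2/(2+|(k:ℝ)-(j:ℝ)|))^(2*β) * (1 + |(k:ℝ) - (j:ℝ)|)⁻¹
              = gg (Nat.dist (k:ℕ) (j:ℕ)) := by
            rw [hggdef]
            simp only []
            rw [dist_cast k j]
          have h2 : (0:ℝ) ≤ gg (Nat.dist (k:ℕ) (i:ℕ)) := hggnn _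
          rw [hgg] at hfb
          linarith
        · -- use decay at i, via symmetry
          have hcase' : |(k:ℝ)-(i:ℝ)| ≤ |(j:ℝ)-(k:ℝ)| := by
            rw [abs_sub_comm (k:ℝ) (i:ℝ), abs_sub_comm (j:ℝ) (k:ℝ)]; exact hcase
          have hcore := core s β hβ hβs (i := j) (j := i) (k := k) hcase'
          rw [nd_symm s β j i, nd_symm s β j k, nd_symm s β k i] at hcore
          -- hcore : nd i j ≤ (2/(2+|k-i|))^(2β) * (nd k j * nd i k)
          have h1pi : (0:ℝ) < 1 + |(k:ℝ) - (i:ℝ)| := by positivity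
          have hmono : (1 + |(k:ℝ) - (j:ℝ)|)⁻¹ ≤ (1 + |(k:ℝ) - (i:ℝ)|)⁻¹ := by
            apply inv_anti₀ h1pi
            rw [abs_sub_comm (i:ℝ) (k:ℝ)] at hcase
            linarith
          have hfb : f k ≤ (2/(2+|(k:ℝ)-(i:ℝ)|))^(2*β) * (1 + |(k:ℝ) - (i:ℝ)|)⁻¹ := by
            rw [hfdef]
            simp only []
            rw [mul_inv_le_iff₀ hden]
            have step : nd s β i j * (1 + |(k:ℝ) - (j:ℝ)|)⁻¹
                ≤ (2/(2+|(k:ℝ)-(i:ℝ)|))^(2*β) * (nd s β k j * nd s β i k)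
                  * (1 + |(k:ℝ) - (j:ℝ)|)⁻¹ := by
              apply mul_le_mul_of_nonneg_right hcore (by positivity)
            calc nd s β i j
                = nd s β i j * ((1 + |(k:ℝ) - (j:ℝ)|)⁻¹ * (1 + |(k:ℝ) - (j:ℝ)|)) := by
                  rw [inv_mul_cancel₀ (ne_of_gt h1pq), mul_one]
              _ = (nd s β i j * (1 + |(k:ℝ) - (j:ℝ)|)⁻¹) * (1 + |(k:ℝ) - (j:ℝ)|) := by ring
              _ ≤ ((2/(2+|(k:ℝ)-(i:ℝ)|))^(2*β) * (nd s β k j * nd s β i k)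
                    * (1 + |(k:ℝ) - (j:ℝ)|)⁻¹) * (1 + |(k:ℝ) - (j:ℝ)|) := by
                  apply mul_le_mul_of_nonneg_right step (by linarith)
              _ = ((2/(2+|(k:ℝ)-(i:ℝ)|))^(2*β) * (nd s β k j * nd s β i k)) := by
                  rw [mul_assoc, inv_mul_cancel₀ (ne_of_gt h1pq), mul_one]
              _ ≤ ((2/(2+|(k:ℝ)-(i:ℝ)|))^(2*β) * (1 + |(k:ℝ) - (i:ℝ)|)⁻¹)
                  * (nd s β i k * (nd s β k j * (1 + |(k:ℝ) - (j:ℝ)|))) := by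
                  have hrpn : (0:ℝ) ≤ (2/(2+|(k:ℝ)-(i:ℝ)|))^(2*β) :=
                    Real.rpow_nonneg (by positivity) _
                  have hfac : 1 ≤ (1 + |(k:ℝ) - (i:ℝ)|)⁻¹ * (1 + |(k:ℝ) - (j:ℝ)|) := by
                    rw [inv_mul_eq_div, le_div_iff₀ h1pi]
                    rw [abs_sub_comm (i:ℝ) (k:ℝ)] at hcase
                    have : |(k:ℝ) - (i:ℝ)| ≤ |(k:ℝ) - (j:ℝ)| := hcase
                    linarith
                  have hLnn : (0:ℝ) ≤ (2/(2+|(k:ℝ)-(i:ℝ)|))^(2*β) * (nd s β k j * nd s β i k) := by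
                    have := hNDpos k j; have := hNDpos i k; positivity
                  calc (2/(2+|(k:ℝ)-(i:ℝ)|))^(2*β) * (nd s β k j * nd s β i k)
                      ≤ ((2/(2+|(k:ℝ)-(i:ℝ)|))^(2*β) * (nd s β k j * nd s β i k))
                        * ((1 + |(k:ℝ) - (i:ℝ)|)⁻¹ * (1 + |(k:ℝ) - (j:ℝ)|)) :=
                        le_mul_of_one_le_right hLnn hfac
                    _ = _ := by ring
          have hgg : (2/(2+|(k:ℝ)-(i:ℝ)|))^(2*β) * (1 + |(k:ℝ) - (i:ℝ)|)⁻¹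
              = gg (Nat.dist (k:ℕ) (i:ℕ)) := by
            rw [hggdef]
            simp only []
            rw [dist_cast k i]
          have h2 : (0:ℝ) ≤ gg (Nat.dist (k:ℕ) (j:ℕ)) := hggnn _
          rw [hgg] at hfb
          linarith
  -- finite-sum bound
  have hsums : ∀ F : Finset ℕ+, ∑ k ∈ F, f k ≤ 4 * 2^β / β := by
    have hus : ∀ (τ : ℕ → ℝ), (∀ n, 1 ≤ n → 0 ≤ τ n) → (∀ n, 1 ≤ n → τ (n+1) ≤ τ n) →
        (∀ n : ℕ, 1 ≤ n → gg n ≤ τ n - τ (n+1)) →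
        ∀ F : Finset ℕ+, ∑ k ∈ F, f k ≤ 2 + 4 * τ 1 := by
      intro τ hτnn hτmono hstep F
      have hcen : ∀ c : ℕ+,
          ∑ k ∈ F, (if k = c then (1:ℝ) else gg (Nat.dist (k:ℕ) (c:ℕ))) ≤ 1 + 2 * τ 1 := by
        intro c
        apply center_sum τ hτnn hτmono c
        · intro k; split <;> [norm_num; exact hggnn _]
        · simp
        · intro k hk; rw [if_neg hk]; exact hstep _ (pn_dist_ne hk)
      calc ∑ k ∈ F, f k
          ≤ ∑ k ∈ F, ((if k = i then (1:ℝ) else gg (Nat.dist (k:ℕ) (i:ℕ)))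
            + (if k = j then (1:ℝ) else gg (Nat.dist (k:ℕ) (j:ℕ)))) :=
            Finset.sum_le_sum (fun k _ => hpt k)
        _ = ∑ k ∈ F, (if k = i then (1:ℝ) else gg (Nat.dist (k:ℕ) (i:ℕ)))
            + ∑ k ∈ F, (if k = j then (1:ℝ) else gg (Nat.dist (k:ℕ) (j:ℕ))) :=
            Finset.sum_add_distrib
        _ ≤ (1 + 2 * τ 1) + (1 + 2 * τ 1) := add_le_add (hcen i) (hcen j)
        _ = 2 + 4 * τ 1 := by ring
    rcases le_total 1 (2*β) with hcase | hcase
    · -- large β : τ n = 2 (1+n)⁻¹, τ 1 = 1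
      set τ : ℕ → ℝ := fun n => 2 * (1+(n:ℝ))⁻¹ with hτ
      have hτnn : ∀ n : ℕ, 1 ≤ n → 0 ≤ τ n := by intro n _; positivity
      have hτmono : ∀ n : ℕ, 1 ≤ n → τ (n+1) ≤ τ n := by
        intro n _
        have h1 : (0:ℝ) < 1+(n:ℝ) := by positivity
        have h2 : (1+(n:ℝ)) ≤ 1+((n:ℕ)+1:ℕ) := by push_cast; linarith
        have := inv_anti₀ h1 h2
        rw [hτ]
        simp only []
        push_cast
        push_cast at this
        nlinarith
      have hstep : ∀ n : ℕ, 1 ≤ n → gg n ≤ τ n - τ (n+1) := by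
        intro n hn
        have hn0 : (0:ℝ) ≤ (n:ℝ) := Nat.cast_nonneg n
        have h2n : (0:ℝ) < 2+(n:ℝ) := by linarith
        have h1n : (0:ℝ) < 1+(n:ℝ) := by linarith
        have hbase : 2/(2+(n:ℝ)) ≤ 1 := by rw [div_le_one h2n]; linarith
        have hbase0 : (0:ℝ) < 2/(2+(n:ℝ)) := by positivity
        have hr : (2/(2+(n:ℝ)))^(2*β) ≤ 2/(2+(n:ℝ)) := by
          calc (2/(2+(n:ℝ)))^(2*β) ≤ (2/(2+(n:ℝ)))^(1:ℝ) :=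
                Real.rpow_le_rpow_of_exponent_ge hbase0 hbase hcase
            _ = 2/(2+(n:ℝ)) := Real.rpow_one _
        have hgle : gg n ≤ (2/(2+(n:ℝ))) * (1+(n:ℝ))⁻¹ := by
          rw [hggdef]
          simp only []
          apply mul_le_mul_of_nonneg_right hr (by positivity)
        have heq : τ n - τ (n+1) = (2/(2+(n:ℝ))) * (1+(n:ℝ))⁻¹ := by
          rw [hτ]
          simp only []
          push_cast
          field_simp
          ring
        rw [heq]
        exact hgle
      have hτ1 : τ 1 = 1 := by rw [hτ]; norm_num
      intro F
      calc ∑ k ∈ F, f k ≤ 2 + 4 * τ 1 := hus τ hτnn hτmono hstep F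
        _ = 6 := by rw [hτ1]; norm_num
        _ ≤ 4 * 2^β / β := numA hβ hβ1
    · -- small β : τ n = (2^(2β)/(2β)) ((n:ℝ)^(2β))⁻¹
      have h2β : (0:ℝ) < 2*β := by linarith
      set τ : ℕ → ℝ := fun n => (2^(2*β)/(2*β)) * (((n:ℝ))^(2*β))⁻¹ with hτ
      have hconst : (0:ℝ) < 2^(2*β)/(2*β) := by
        have := Real.rpow_pos_of_pos (by norm_num : (0:ℝ) < 2) (2*β); positivity
      have hτnn : ∀ n : ℕ, 1 ≤ n → 0 ≤ τ n := by
        intro n _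
        have : (0:ℝ) ≤ ((n:ℝ))^(2*β) := Real.rpow_nonneg (Nat.cast_nonneg n) _
        positivity
      have hτmono : ∀ n : ℕ, 1 ≤ n → τ (n+1) ≤ τ n := by
        intro n hn
        have hn1 : (1:ℝ) ≤ (n:ℝ) := by exact_mod_cast hn
        have h1 : (0:ℝ) < ((n:ℝ))^(2*β) := Real.rpow_pos_of_pos (by linarith) _
        have h2 : ((n:ℝ))^(2*β) ≤ (((n+1:ℕ)):ℝ)^(2*β) := by
          apply Real.rpow_le_rpow (by linarith) _ (le_of_lt h2β)
          push_cast; linarith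
        have := inv_anti₀ h1 h2
        rw [hτ]
        simp only []
        exact mul_le_mul_of_nonneg_left this (le_of_lt hconst)
      have hstep : ∀ n : ℕ, 1 ≤ n → gg n ≤ τ n - τ (n+1) := by
        intro n hn
        have hn1 : (1:ℝ) ≤ (n:ℝ) := by exact_mod_cast hn
        have h1n : (0:ℝ) < 1+(n:ℝ) := by linarith
        have h2n : (0:ℝ) < 2+(n:ℝ) := by linarith
        have hstep1 : (2/(2+(n:ℝ)))^(2*β) ≤ (2/(1+(n:ℝ)))^(2*β) := by
          apply Real.rpow_le_rpow (by positivity) _ (le_of_lt h2β)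
          apply div_le_div_of_nonneg_left (by norm_num) h1n (by linarith)
        have hstep2 : (2/(1+(n:ℝ)))^(2*β) = 2^(2*β) * ((1+(n:ℝ))^(2*β))⁻¹ := by
          rw [Real.div_rpow (by norm_num) (le_of_lt h1n), div_eq_mul_inv]
        have htele := tele_step h2β hn1
        -- gg n ≤ 2^(2β) * (((1+n)^(2β))⁻¹ * (1+n)⁻¹) ≤ 2^(2β) * ((2β)⁻¹ * (...))
        have hgle : gg n ≤ 2^(2*β) * (((1+(n:ℝ))^(2*β))⁻¹ * (1+(n:ℝ))⁻¹) := by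
          rw [hggdef]
          simp only []
          calc (2/(2+(n:ℝ)))^(2*β) * (1+(n:ℝ))⁻¹
              ≤ (2/(1+(n:ℝ)))^(2*β) * (1+(n:ℝ))⁻¹ :=
                mul_le_mul_of_nonneg_right hstep1 (by positivity)
            _ = 2^(2*β) * (((1+(n:ℝ))^(2*β))⁻¹ * (1+(n:ℝ))⁻¹) := by
                rw [hstep2]; ring
        have h2p : (0:ℝ) ≤ (2:ℝ)^(2*β) := Real.rpow_nonneg (by norm_num) _
        calc gg n ≤ 2^(2*β) * (((1+(n:ℝ))^(2*β))⁻¹ * (1+(n:ℝ))⁻¹) := hgle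
          _ ≤ 2^(2*β) * ((2*β)⁻¹ * ((((n:ℝ))^(2*β))⁻¹ - ((1+(n:ℝ))^(2*β))⁻¹)) :=
              mul_le_mul_of_nonneg_left htele h2p
          _ = τ n - τ (n+1) := by
              rw [hτ]
              simp only []
              push_cast
              rw [show ((n:ℝ)+1) = 1+(n:ℝ) by ring]
              field_simp
      have hτ1 : τ 1 = 2^(2*β)/(2*β) := by
        rw [hτ]; simp [Real.one_rpow]
      intro F
      calc ∑ k ∈ F, f k ≤ 2 + 4 * τ 1 := hus τ hτnn hτmono hstep F
        _ = 2 + 4 * (2^(2*β)/(2*β)) := by rw [hτ1]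
        _ ≤ 4 * 2^β / β := numB hβ (by linarith)
  -- summability and tsum bound
  have hT0 : (0:ℝ) ≤ 4 * 2^β / β := by
    have : (0:ℝ) < 2^β := Real.rpow_pos_of_pos (by norm_num) β
    positivity
  set e : ℕ ≃ ℕ+ := Equiv.pnatEquivNat.symm with hedef
  have hpart : ∀ n : ℕ, ∑ x ∈ Finset.range n, f (e x) ≤ 4 * 2^β / β := by
    intro n
    have hinj : ∀ x ∈ Finset.range n, ∀ y ∈ Finset.range n, e x = e y → x = y :=
      fun x _ y _ h => e.injective h
    rw [← Finset.sum_image (g := fun x => e x) (f := f) hinj]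
    exact hsums _
  have hsum1 : Summable (fun n => f (e n)) :=
    summable_of_sum_range_le (fun n => hfnn _) hpart
  have hSf : Summable f := (Equiv.summable_iff e).1 hsum1
  have htsum : ∑' k, f k ≤ 4 * 2^β / β := by
    rw [← Equiv.tsum_eq e f]
    exact Summable.tsum_le_of_sum_range_le hsum1 hpart
  have hfact : (fun k : ℕ+ => (nd s β i k * (nd s β k j * (1+|(k:ℝ)-(j:ℝ)|)))⁻¹)
      = fun k => (nd s β i j)⁻¹ * f k := by
    funext k
    rw [hfdef]
    exact (inv_mul_cancel_left₀ (ne_of_gt (hNDpos i j)) _).symm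
  constructor
  · rw [hfact]
    exact hSf.mul_left _
  · have heq2 : nd s β i j * ∑' k : ℕ+, (nd s β i k * (nd s β k j * (1+|(k:ℝ)-(j:ℝ)|)))⁻¹
        = ∑' k, f k := by
      rw [hfact, tsum_mul_left, ← mul_assoc,
        mul_inv_cancel₀ (ne_of_gt (hNDpos i j)), one_mul]
    rw [heq2]
    exact le_trans htsum (numC hβ hβs)


/-- Let `s > 0`, `0 < β ≤ min{s/2, 1}`, let `A ∈ M_{s,β}` (i.e. its blocks satisfy
`(i∧j)^β w(i,j)^s ‖A_i^j‖ ≤ |A|_{s,β} = MA`) and `B ∈ M_{s,β}^+` (i.e. its blocks satisfy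
`(i∧j)^β w(i,j)^s (1+|i−j|) ‖B_i^j‖ ≤ |B|_{s,β+} = MB`).  Blocks are viewed as (continuous
linear) operators `ℂ^{2d_j} → ℂ^{2d_i}` with the `ℓ²`-operator norm.  Then the blockwise
products `(AB)_i^j = ∑_k A_i^k B_k^j` and `(BA)_i^j = ∑_k B_i^k A_k^j` converge absolutely in
operator norm, and `AB, BA ∈ M_{s,β}` with
`|AB|_{s,β}, |BA|_{s,β} ≤ (2^{s/2+2}/β)·|A|_{s,β}·|B|_{s,β+}`. -/
theorem product_Msβ_Msβplus_mem_Msβ (s β : ℝ) (hs : 0 < s) (hβ : 0 < β)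
    (hβs : β ≤ min (s / 2) 1) (d : ℕ+ → ℕ+)
    (A B : ∀ i j : ℕ+,
      EuclideanSpace ℂ (Fin (dim d j)) →L[ℂ] EuclideanSpace ℂ (Fin (dim d i)))
    (MA MB : ℝ)
    (hA : ∀ i j : ℕ+, ((min i j : ℕ+) : ℝ) ^ β * w i j ^ s * ‖A i j‖ ≤ MA)
    (hB : ∀ i j : ℕ+, ((min i j : ℕ+) : ℝ) ^ β * w i j ^ s * (1 + |(i : ℝ) - (j : ℝ)|) *
      ‖B i j‖ ≤ MB) :
    (∀ i j : ℕ+, Summable fun k : ℕ+ => ‖(A i k).comp (B k j)‖) ∧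
    (∀ i j : ℕ+, Summable fun k : ℕ+ => ‖(B i k).comp (A k j)‖) ∧
    (∀ i j : ℕ+, ((min i j : ℕ+) : ℝ) ^ β * w i j ^ s *
      ‖∑' k : ℕ+, (A i k).comp (B k j)‖ ≤ 2 ^ (s / 2 + 2) / β * MA * MB) ∧
    (∀ i j : ℕ+, ((min i j : ℕ+) : ℝ) ^ β * w i j ^ s *
      ‖∑' k : ℕ+, (B i k).comp (A k j)‖ ≤ 2 ^ (s / 2 + 2) / β * MA * MB) := by
  have hβ1 : β ≤ 1 := le_trans hβs (min_le_right _ _)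
  have hβs2 : 2*β ≤ s := by
    have := le_trans hβs (min_le_left _ _); linarith
  have hs0 : (0:ℝ) ≤ s := by linarith
  have hβ0 : (0:ℝ) ≤ β := le_of_lt hβ
  have hNDpos : ∀ a b : ℕ+, 0 < nd s β a b := nd_pos s β hs0 hβ0
  have hnd_eq : ∀ a b : ℕ+, ((min a b : ℕ+):ℝ)^β * w a b^s = nd s β a b := by
    intro a b; rw [nd, min_cast]
  have hMA0 : 0 ≤ MA := by
    refine le_trans ?_ (hA 1 1)
    have h1 : (0:ℝ) ≤ ((min 1 1 : ℕ+):ℝ)^β * w 1 1^s := by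
      rw [hnd_eq]; exact le_of_lt (hNDpos 1 1)
    positivity
  have hMB0 : 0 ≤ MB := by
    refine le_trans ?_ (hB 1 1)
    have h1 : (0:ℝ) ≤ ((min 1 1 : ℕ+):ℝ)^β * w 1 1^s := by
      rw [hnd_eq]; exact le_of_lt (hNDpos 1 1)
    have h2 : (0:ℝ) ≤ 1 + |(1:ℝ) - (1:ℝ)| := by positivity
    positivity
  have hAb : ∀ a b : ℕ+, ‖A a b‖ ≤ MA * (nd s β a b)⁻¹ := by
    intro a b
    have h := hA a b
    rw [hnd_eq] at h
    calc ‖A a b‖ = (nd s β a b)⁻¹ * (nd s β a b * ‖A a b‖) :=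
          (inv_mul_cancel_left₀ (ne_of_gt (hNDpos a b)) _).symm
      _ ≤ (nd s β a b)⁻¹ * MA := by
          have := hNDpos a b
          apply mul_le_mul_of_nonneg_left h (by positivity)
      _ = MA * (nd s β a b)⁻¹ := by ring
  have hBb : ∀ a b : ℕ+, ‖B a b‖ ≤ MB * (nd s β a b * (1 + |(a:ℝ)-(b:ℝ)|))⁻¹ := by
    intro a b
    have h := hB a b
    rw [hnd_eq] at h
    have hpos : (0:ℝ) < nd s β a b * (1 + |(a:ℝ)-(b:ℝ)|) := by
      have h1 := hNDpos a b
      have h2 : (0:ℝ) < 1 + |(a:ℝ)-(b:ℝ)| := by positivity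
      positivity
    calc ‖B a b‖ = (nd s β a b * (1 + |(a:ℝ)-(b:ℝ)|))⁻¹
          * ((nd s β a b * (1 + |(a:ℝ)-(b:ℝ)|)) * ‖B a b‖) :=
          (inv_mul_cancel_left₀ (ne_of_gt hpos) _).symm
      _ ≤ (nd s β a b * (1 + |(a:ℝ)-(b:ℝ)|))⁻¹ * MB := by
          apply mul_le_mul_of_nonneg_left ?_ (by positivity)
          calc (nd s β a b * (1 + |(a:ℝ)-(b:ℝ)|)) * ‖B a b‖
              = nd s β a b * (1 + |(a:ℝ)-(b:ℝ)|) * ‖B a b‖ := by ring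
            _ ≤ MB := h
      _ = MB * (nd s β a b * (1 + |(a:ℝ)-(b:ℝ)|))⁻¹ := by ring
  -- termwise bounds
  have htermAB : ∀ i j k : ℕ+, ‖((A i k).comp (B k j))‖
      ≤ MA * MB * (nd s β i k * (nd s β k j * (1 + |(k:ℝ)-(j:ℝ)|)))⁻¹ := by
    intro i j k
    calc ‖(A i k).comp (B k j)‖ ≤ ‖A i k‖ * ‖B k j‖ := ContinuousLinearMap.opNorm_comp_le _ _
      _ ≤ (MA * (nd s β i k)⁻¹) * (MB * (nd s β k j * (1 + |(k:ℝ)-(j:ℝ)|))⁻¹) := by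
          apply mul_le_mul (hAb i k) (hBb k j) (norm_nonneg _)
          have := hNDpos i k; positivity
      _ = MA * MB * (nd s β i k * (nd s β k j * (1 + |(k:ℝ)-(j:ℝ)|)))⁻¹ := by
          have h1 := ne_of_gt (hNDpos i k)
          have h2 := ne_of_gt (hNDpos k j)
          have h3 : (1 + |(k:ℝ)-(j:ℝ)|) ≠ 0 := by positivity
          field_simp
  have htermBA : ∀ i j k : ℕ+, ‖((B i k).comp (A k j))‖
      ≤ MA * MB * (nd s β j k * (nd s β k i * (1 + |(k:ℝ)-(i:ℝ)|)))⁻¹ := by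
    intro i j k
    calc ‖(B i k).comp (A k j)‖ ≤ ‖B i k‖ * ‖A k j‖ := ContinuousLinearMap.opNorm_comp_le _ _
      _ ≤ (MB * (nd s β i k * (1 + |(i:ℝ)-(k:ℝ)|))⁻¹) * (MA * (nd s β k j)⁻¹) := by
          apply mul_le_mul (hBb i k) (hAb k j) (norm_nonneg _)
          have h1 := hNDpos i k
          have h2 : (0:ℝ) < 1 + |(i:ℝ)-(k:ℝ)| := by positivity
          positivity
      _ = MA * MB * (nd s β j k * (nd s β k i * (1 + |(k:ℝ)-(i:ℝ)|)))⁻¹ := by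
          rw [nd_symm s β j k, nd_symm s β k i, abs_sub_comm (k:ℝ) (i:ℝ)]
          have h1 := ne_of_gt (hNDpos i k)
          have h2 := ne_of_gt (hNDpos k j)
          have h3 : (1 + |(i:ℝ)-(k:ℝ)|) ≠ 0 := by positivity
          field_simp
  have hkeyAB := fun i j : ℕ+ => key s β hβ hβ1 hβs2 i j
  have hmajAB : ∀ i j : ℕ+, Summable (fun k : ℕ+ =>
      MA * MB * (nd s β i k * (nd s β k j * (1 + |(k:ℝ)-(j:ℝ)|)))⁻¹) :=
    fun i j => ((hkeyAB i j).1).mul_left _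
  have hsummAB : ∀ i j : ℕ+, Summable (fun k : ℕ+ => ‖(A i k).comp (B k j)‖) := by
    intro i j
    exact Summable.of_nonneg_of_le (fun k => norm_nonneg _) (fun k => htermAB i j k) (hmajAB i j)
  have hsummBA : ∀ i j : ℕ+, Summable (fun k : ℕ+ => ‖(B i k).comp (A k j)‖) := by
    intro i j
    exact Summable.of_nonneg_of_le (fun k => norm_nonneg _) (fun k => htermBA i j k)
      (((hkeyAB j i).1).mul_left _)
  refine ⟨hsummAB, hsummBA, ?_, ?_⟩
  · intro i j
    rw [hnd_eq]
    calc nd s β i j * ‖∑' k : ℕ+, (A i k).comp (B k j)‖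
        ≤ nd s β i j * ∑' k : ℕ+, ‖(A i k).comp (B k j)‖ := by
          apply mul_le_mul_of_nonneg_left (norm_tsum_le_tsum_norm (hsummAB i j))
            (le_of_lt (hNDpos i j))
      _ ≤ nd s β i j * ∑' k : ℕ+, MA * MB * (nd s β i k * (nd s β k j * (1 + |(k:ℝ)-(j:ℝ)|)))⁻¹ := by
          apply mul_le_mul_of_nonneg_left
            (Summable.tsum_le_tsum (htermAB i j) (hsummAB i j) (hmajAB i j)) (le_of_lt (hNDpos i j))
      _ = MA * MB * (nd s β i j *
            ∑' k : ℕ+, (nd s β i k * (nd s β k j * (1 + |(k:ℝ)-(j:ℝ)|)))⁻¹) := by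
          rw [tsum_mul_left]
          ring
      _ ≤ MA * MB * (2^(s/2+2)/β) := by
          apply mul_le_mul_of_nonneg_left (hkeyAB i j).2 (by positivity)
      _ = 2^(s/2+2)/β * MA * MB := by ring
  · intro i j
    rw [hnd_eq]
    calc nd s β i j * ‖∑' k : ℕ+, (B i k).comp (A k j)‖
        ≤ nd s β i j * ∑' k : ℕ+, ‖(B i k).comp (A k j)‖ := by
          apply mul_le_mul_of_nonneg_left (norm_tsum_le_tsum_norm (hsummBA i j))
            (le_of_lt (hNDpos i j))
      _ ≤ nd s β i j * ∑' k : ℕ+, MA * MB * (nd s β j k * (nd s β k i * (1 + |(k:ℝ)-(i:ℝ)|)))⁻¹ := by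
          apply mul_le_mul_of_nonneg_left
            (Summable.tsum_le_tsum (htermBA i j) (hsummBA i j) (((hkeyAB j i).1).mul_left _))
            (le_of_lt (hNDpos i j))
      _ = MA * MB * (nd s β j i *
            ∑' k : ℕ+, (nd s β j k * (nd s β k i * (1 + |(k:ℝ)-(i:ℝ)|)))⁻¹) := by
          rw [tsum_mul_left, nd_symm s β j i]
          ring
      _ ≤ MA * MB * (2^(s/2+2)/β) := by
          apply mul_le_mul_of_nonneg_left (hkeyAB j i).2 (by positivity)
      _ = 2^(s/2+2)/β * MA * MB := by ring
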